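/- For n ≥ 1, m ≥ n, and q a prime power, the bilinear forms graph Γ(Mat(n,m,F_q)) (vertices: n×m matrices over F_q, adjacency: rank of difference equals 1) is distance-transitive: for any two pairs of matrices (V,W) and (X,Y) with rank(V−W) = rank(X−Y), there is a graph automorphism mapping V to X and W to Y. -/

import Mathlib

private lemma rank_neg' {F : Type*} [Field F] {a b : ℕ} (A : Matrix (Fin a) (Fin b) F) :
    (-A).rank = A.rank := by
  have h : LinearMap.range (-A).mulVecLin = LinearMap.range A.mulVecLin := by
    ext x
    simp only [LinearMap.mem_range, Matrix.mulVecLin_apply, Matrix.neg_mulVec]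
    constructor
    · rintro ⟨v, hv⟩; exact ⟨-v, by simp [Matrix.mulVec_neg, hv]⟩
    · rintro ⟨v, hv⟩; exact ⟨-v, by simp [Matrix.mulVec_neg, hv]⟩
  rw [Matrix.rank, Matrix.rank, h]


open LinearMap Submodule Module

private lemma equiv_of_rank_eq' {F V W : Type*} [Field F] [AddCommGroup V] [Module F V]
    [AddCommGroup W] [Module F W] [FiniteDimensional F V] [FiniteDimensional F W]
    (f g : V →ₗ[F] W)
    (h : finrank F (LinearMap.range f) = finrank F (LinearMap.range g)) :
    ∃ (e₁ : V ≃ₗ[F] V) (e₂ : W ≃ₗ[F] W),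
      g = e₂.toLinearMap ∘ₗ f ∘ₗ e₁.toLinearMap := by
  obtain ⟨Uf, hUf⟩ := Submodule.exists_isCompl (LinearMap.ker f)
  obtain ⟨Ug, hUg⟩ := Submodule.exists_isCompl (LinearMap.ker g)
  obtain ⟨Cf, hCf⟩ := Submodule.exists_isCompl (LinearMap.range f)
  obtain ⟨Cg, hCg⟩ := Submodule.exists_isCompl (LinearMap.range g)
  let ρf : Uf ≃ₗ[F] LinearMap.range f :=
    (Submodule.quotientEquivOfIsCompl _ Uf hUf).symm.trans f.quotKerEquivRange
  let ρg : Ug ≃ₗ[F] LinearMap.range g :=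
    (Submodule.quotientEquivOfIsCompl _ Ug hUg).symm.trans g.quotKerEquivRange
  have hρf : ∀ u : Uf, (ρf u : W) = f u := fun u => by
    simp [ρf, Submodule.quotientEquivOfIsCompl_symm_apply,
      LinearMap.quotKerEquivRange_apply_mk]
  have hρg : ∀ u : Ug, (ρg u : W) = g u := fun u => by
    simp [ρg, Submodule.quotientEquivOfIsCompl_symm_apply,
      LinearMap.quotKerEquivRange_apply_mk]
  have hUfg : finrank F Ug = finrank F Uf := by
    have := ρf.finrank_eq
    have := ρg.finrank_eq
    omega
  have hker : finrank F (LinearMap.ker g) = finrank F (LinearMap.ker f) := by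
    have h1 := Submodule.finrank_add_eq_of_isCompl hUf
    have h2 := Submodule.finrank_add_eq_of_isCompl hUg
    omega
  have hC : finrank F Cf = finrank F Cg := by
    have h1 := Submodule.finrank_add_eq_of_isCompl hCf
    have h2 := Submodule.finrank_add_eq_of_isCompl hCg
    omega
  let κ : (LinearMap.ker g : Submodule F V) ≃ₗ[F] LinearMap.ker f :=
    LinearEquiv.ofFinrankEq _ _ hker
  let ι : Ug ≃ₗ[F] Uf := LinearEquiv.ofFinrankEq _ _ hUfg
  let σ : (LinearMap.range f : Submodule F W) ≃ₗ[F] LinearMap.range g :=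
    ρf.symm.trans (ι.symm.trans ρg)
  let τ : Cf ≃ₗ[F] Cg := LinearEquiv.ofFinrankEq _ _ hC
  let e₁ : V ≃ₗ[F] V :=
    (Submodule.prodEquivOfIsCompl _ _ hUg).symm.trans
      ((κ.prodCongr ι).trans (Submodule.prodEquivOfIsCompl _ _ hUf))
  let e₂ : W ≃ₗ[F] W :=
    (Submodule.prodEquivOfIsCompl _ _ hCf).symm.trans
      ((σ.prodCongr τ).trans (Submodule.prodEquivOfIsCompl _ _ hCg))
  refine ⟨e₁, e₂, ?_⟩
  ext x
  obtain ⟨k, u, hk, hu, rfl⟩ := Submodule.codisjoint_iff_exists_add_eq.mp hUg.codisjoint x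
  have he₁ : e₁ (k + u) = (κ ⟨k, hk⟩ : V) + (ι ⟨u, hu⟩ : V) := by
    have hx : k + u = Submodule.prodEquivOfIsCompl _ _ hUg (⟨k, hk⟩, ⟨u, hu⟩) := by
      simp [Submodule.coe_prodEquivOfIsCompl']
    rw [hx]
    simp only [e₁, LinearEquiv.trans_apply, LinearEquiv.symm_apply_apply,
      LinearEquiv.prodCongr_apply]
    simp [Submodule.coe_prodEquivOfIsCompl']
  have hfk : f (κ ⟨k, hk⟩ : V) = 0 := (κ ⟨k, hk⟩).2
  have hfu : f (ι ⟨u, hu⟩ : V) = (ρf (ι ⟨u, hu⟩) : W) := (hρf _).symm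
  have he₂ : ∀ y : LinearMap.range f, e₂ (y : W) = (σ y : W) := by
    intro y
    have hy : (y : W) = Submodule.prodEquivOfIsCompl _ _ hCf (y, 0) := by
      simp [Submodule.coe_prodEquivOfIsCompl']
    rw [hy]
    simp only [e₂, LinearEquiv.trans_apply, LinearEquiv.symm_apply_apply,
      LinearEquiv.prodCongr_apply]
    simp [Submodule.coe_prodEquivOfIsCompl']
  have hσ : σ (ρf (ι ⟨u, hu⟩)) = ρg ⟨u, hu⟩ := by
    simp [σ]
  simp only [LinearMap.comp_apply, LinearEquiv.coe_coe]
  rw [he₁, map_add f, hfk, zero_add, hfu, he₂, hσ, hρg]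
  have hgk : g k = 0 := hk
  rw [map_add g, hgk, zero_add]

private lemma exists_PQ {F : Type*} [Field F] {a b : ℕ}
    (A B : Matrix (Fin a) (Fin b) F) (h : A.rank = B.rank) :
    ∃ (P : Matrix (Fin a) (Fin a) F) (Q : Matrix (Fin b) (Fin b) F),
      IsUnit P.det ∧ IsUnit Q.det ∧ B = P * A * Q := by
  obtain ⟨e₁, e₂, he⟩ := equiv_of_rank_eq' A.mulVecLin B.mulVecLin h
  refine ⟨LinearMap.toMatrix' e₂.toLinearMap, LinearMap.toMatrix' e₁.toLinearMap, ?_, ?_, ?_⟩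
  · exact Matrix.isUnit_det_of_right_inverse (B := LinearMap.toMatrix' e₂.symm.toLinearMap) <| by
      rw [← LinearMap.toMatrix'_comp, LinearEquiv.comp_coe, LinearEquiv.symm_trans_self,
        LinearEquiv.refl_toLinearMap, LinearMap.toMatrix'_id]
  · exact Matrix.isUnit_det_of_right_inverse (B := LinearMap.toMatrix' e₁.symm.toLinearMap) <| by
      rw [← LinearMap.toMatrix'_comp, LinearEquiv.comp_coe, LinearEquiv.symm_trans_self,
        LinearEquiv.refl_toLinearMap, LinearMap.toMatrix'_id]
  · have h2 := congrArg LinearMap.toMatrix' he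
    rw [LinearMap.toMatrix'_comp, LinearMap.toMatrix'_comp, ← Matrix.toLin'_apply' B,
      LinearMap.toMatrix'_toLin', ← Matrix.toLin'_apply' A, LinearMap.toMatrix'_toLin'] at h2
    rw [h2, Matrix.mul_assoc]

/-- The bilinear forms graph: vertices are `n × m` matrices over `F`, two matrices being
adjacent when their difference has rank one. -/
def bfGraph (F : Type*) [Field F] (n m : ℕ) : SimpleGraph (Matrix (Fin n) (Fin m) F) where
  Adj A B := (A - B).rank = 1
  symm := by
    constructor
    intro A B h
    rw [show B - A = -(A - B) by abel, rank_neg', h]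
  loopless := by
    constructor
    intro A h
    simp at h

/-- The bilinear forms graph is distance-transitive: any pair of matrices at a given rank
distance can be mapped to any other pair at the same rank distance by a graph automorphism. -/
theorem bfGraph_distanceTransitive (F : Type*) [Field F] [Fintype F]
    (n m : ℕ) (hn : 1 ≤ n) (hnm : n ≤ m)
    (V W X Y : Matrix (Fin n) (Fin m) F) (h : (V - W).rank = (X - Y).rank) :
    ∃ φ : bfGraph F n m ≃g bfGraph F n m, φ V = X ∧ φ W = Y := by
  obtain ⟨P, Q, hP, hQ, hPQ⟩ := exists_PQ (V - W) (X - Y) h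
  set C : Matrix (Fin n) (Fin m) F := X - P * V * Q with hC
  have hPinv : P⁻¹ * P = 1 := Matrix.nonsing_inv_mul P hP
  have hPinv' : P * P⁻¹ = 1 := Matrix.mul_nonsing_inv P hP
  have hQinv : Q * Q⁻¹ = 1 := Matrix.mul_nonsing_inv Q hQ
  have hQinv' : Q⁻¹ * Q = 1 := Matrix.nonsing_inv_mul Q hQ
  let e : Matrix (Fin n) (Fin m) F ≃ Matrix (Fin n) (Fin m) F :=
    { toFun := fun Z => P * Z * Q + C
      invFun := fun Z => P⁻¹ * ((Z - C) * Q⁻¹)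
      left_inv := by
        intro Z
        show P⁻¹ * ((P * Z * Q + C - C) * Q⁻¹) = Z
        rw [add_sub_cancel_right, Matrix.mul_assoc (P * Z), hQinv, Matrix.mul_one,
          ← Matrix.mul_assoc, hPinv, Matrix.one_mul]
      right_inv := by
        intro Z
        show P * (P⁻¹ * ((Z - C) * Q⁻¹)) * Q + C = Z
        rw [← Matrix.mul_assoc, ← Matrix.mul_assoc, hPinv', Matrix.one_mul,
          Matrix.mul_assoc, hQinv', Matrix.mul_one, sub_add_cancel] }
  have key : ∀ A B : Matrix (Fin n) (Fin m) F, e A - e B = P * (A - B) * Q := by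
    intro A B
    show P * A * Q + C - (P * B * Q + C) = P * (A - B) * Q
    rw [Matrix.mul_sub, Matrix.sub_mul]
    abel
  refine ⟨⟨e, ?_⟩, ?_, ?_⟩
  · intro A B
    show (e A - e B).rank = 1 ↔ (A - B).rank = 1
    rw [key, Matrix.rank_mul_eq_left_of_isUnit_det Q _ hQ,
      Matrix.rank_mul_eq_right_of_isUnit_det P _ hP]
  · show P * V * Q + C = X
    rw [hC, add_sub_cancel]
  · show P * W * Q + C = Y
    have h1 : P * (V - W) * Q = P * V * Q - P * W * Q := by
      rw [Matrix.mul_sub, Matrix.sub_mul]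
    rw [hC, show Y = X - (X - Y) from (sub_sub_cancel X Y).symm, hPQ, h1]
    abel
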